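/- For every i = 1, …, m the class of z_i in the quotient ring Λ^ℂ[z_1, …, z_m]/SR_ω(X) is invertible. -/

import Mathlib

noncomputable section

open scoped Classical Pointwise

/-- Auxiliary: the sum of two subsets of `ℝ` each of which meets every interval `(-∞, C]`
in a finite set again has this property. -/
theorem add_inter_Iic_finite {A B : Set ℝ}
    (hA : ∀ C : ℝ, (A ∩ Set.Iic C).Finite) (hB : ∀ C : ℝ, (B ∩ Set.Iic C).Finite) :
    ∀ C : ℝ, ((A + B) ∩ Set.Iic C).Finite := by
  intro C
  rcases Set.eq_empty_or_nonempty A with hAe | ⟨a₀, ha₀⟩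
  · simp [hAe]
  rcases Set.eq_empty_or_nonempty B with hBe | ⟨b₀, hb₀⟩
  · simp [hBe]
  obtain ⟨a₁, ha₁A, ha₁⟩ : ∃ a₁ ∈ A, ∀ a ∈ A, a₁ ≤ a := by
    obtain ⟨a₁, h₁, h₂⟩ := Set.exists_min_image _ id (hA a₀) ⟨a₀, ha₀, Set.self_mem_Iic⟩
    refine ⟨a₁, h₁.1, fun a ha => ?_⟩
    by_cases hle : a ≤ a₀
    · exact h₂ a ⟨ha, hle⟩
    · exact le_trans (h₂ a₀ ⟨ha₀, Set.self_mem_Iic⟩) (le_of_not_ge hle)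
  obtain ⟨b₁, hb₁B, hb₁⟩ : ∃ b₁ ∈ B, ∀ b ∈ B, b₁ ≤ b := by
    obtain ⟨b₁, h₁, h₂⟩ := Set.exists_min_image _ id (hB b₀) ⟨b₀, hb₀, Set.self_mem_Iic⟩
    refine ⟨b₁, h₁.1, fun b hb => ?_⟩
    by_cases hle : b ≤ b₀
    · exact h₂ b ⟨hb, hle⟩
    · exact le_trans (h₂ b₀ ⟨hb₀, Set.self_mem_Iic⟩) (le_of_not_ge hle)
  have hsub : (A + B) ∩ Set.Iic C ⊆
      (fun p : ℝ × ℝ => p.1 + p.2) '' ((A ∩ Set.Iic (C - b₁)) ×ˢ (B ∩ Set.Iic (C - a₁))) := by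
    rintro r ⟨hr, hrC⟩
    rw [Set.mem_add] at hr
    obtain ⟨a, ha, b, hb, rfl⟩ := hr
    have hC : a + b ≤ C := hrC
    exact ⟨(a, b), ⟨⟨ha, by have := hb₁ b hb; simp only [Set.mem_Iic]; linarith⟩,
      ⟨hb, by have := ha₁ a ha; simp only [Set.mem_Iic]; linarith⟩⟩, rfl⟩
  exact Set.Finite.subset (Set.Finite.image _ (Set.Finite.prod (hA _) (hB _))) hsub

variable (F : Type*) [Field F]

/-- The universal Novikov field `Λ^F`: the subring of Hahn series over `ℝ` with coefficients
in `F` whose support meets every interval `(-∞, C]` in a finite set.  (Formal sums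
`Σ aᵢ T^{λᵢ}` with `λᵢ → ∞`.) -/
def Novikov : Subring (HahnSeries ℝ F) where
  carrier := {s | ∀ C : ℝ, (s.support ∩ Set.Iic C).Finite}
  zero_mem' := by intro C; simp [HahnSeries.support_zero]
  one_mem' := by
    intro C
    refine Set.Finite.subset (Set.finite_singleton (0 : ℝ)) ?_
    intro r hr
    have h1 : (1 : HahnSeries ℝ F).coeff r ≠ 0 := hr.1
    rw [HahnSeries.coeff_one] at h1
    by_contra hne
    simp only [Set.mem_singleton_iff] at hne
    simp [hne] at h1
  add_mem' := by
    intro a b ha hb C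
    refine Set.Finite.subset ((ha C).union (hb C)) ?_
    intro r hr
    rcases HahnSeries.support_add_subset _ _ hr.1 with h | h
    · exact Or.inl ⟨h, hr.2⟩
    · exact Or.inr ⟨h, hr.2⟩
  neg_mem' := by
    intro a ha C
    refine Set.Finite.subset (ha C) ?_
    intro r hr
    rw [HahnSeries.support_neg] at hr
    exact hr
  mul_mem' := by
    intro a b ha hb C
    refine Set.Finite.subset (add_inter_Iic_finite ha hb C) ?_
    intro r hr
    exact ⟨HahnSeries.support_mul_subset hr.1, hr.2⟩

/-- The element `T^c` of the universal Novikov field. -/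
def NovikovT (c : ℝ) : Novikov F :=
  ⟨HahnSeries.single c 1, by
    intro C
    refine Set.Finite.subset (Set.finite_singleton c) ?_
    intro r hr
    exact HahnSeries.support_single_subset hr.1⟩

/-- The constant element `c·T^0` of the universal Novikov field. -/
def NovikovC (c : F) : Novikov F :=
  ⟨HahnSeries.single (0 : ℝ) c, by
    intro C
    refine Set.Finite.subset (Set.finite_singleton (0 : ℝ)) ?_
    intro r hr
    exact HahnSeries.support_single_subset hr.1⟩

variable {F}

/-- Membership in `Λ₀^F ⊆ Λ^F`: all exponents are `≥ 0`. -/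
def MemLambda0 (x : Novikov F) : Prop :=
  ∀ r : ℝ, r < 0 → (x : HahnSeries ℝ F).coeff r = 0

/-- Membership in `Λ₊^F ⊆ Λ₀^F`: all exponents are `> 0`. -/
def MemLambdaPlus (x : Novikov F) : Prop :=
  ∀ r : ℝ, r ≤ 0 → (x : HahnSeries ℝ F).coeff r = 0


/-- The affine functions `ℓᵢ(u) = ⟨u, vᵢ⟩ - λᵢ` attached to a moment polytope. -/
def ell (n m : ℕ) (v : Fin m → Fin n → ℤ) (lam : Fin m → ℝ) (i : Fin m) (u : Fin n → ℝ) : ℝ :=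
  (∑ j, u j * (v i j : ℝ)) - lam i

/-- The polytope `P = {u | ℓᵢ(u) ≥ 0 for all i}`. -/
def moment (n m : ℕ) (v : Fin m → Fin n → ℤ) (lam : Fin m → ℝ) : Set (Fin n → ℝ) :=
  {u | ∀ i, 0 ≤ ell n m v lam i u}


/-- The facet `∂ᵢP = {u ∈ P | ℓᵢ(u) = 0}`. -/
def facet (n m : ℕ) (v : Fin m → Fin n → ℤ) (lam : Fin m → ℝ) (i : Fin m) :
    Set (Fin n → ℝ) :=
  {u ∈ moment n m v lam | ell n m v lam i u = 0}

/-- A subset `S ⊆ {1, …, m}` spans a cone of the normal fan iff `⋂_{i ∈ S} ∂ᵢP ≠ ∅`. -/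
def SpansCone (n m : ℕ) (v : Fin m → Fin n → ℤ) (lam : Fin m → ℝ)
    (Sc : Finset (Fin m)) : Prop :=
  (⋂ i ∈ Sc, facet n m v lam i).Nonempty

/-- A primitive collection: a subset which does not span a cone of the normal fan while
every proper subset does. -/
def IsPrimitiveCollection (n m : ℕ) (v : Fin m → Fin n → ℤ) (lam : Fin m → ℝ)
    (Pc : Finset (Fin m)) : Prop :=
  ¬ SpansCone n m v lam Pc ∧ ∀ Sc ⊂ Pc, SpansCone n m v lam Sc

/-- `P` is a (compact) Delzant polytope: every facet has dimension `n - 1`, and at every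
vertex exactly `n` facets meet, whose normal vectors form a `ℤ`-basis of `ℤⁿ`. -/
def IsDelzant (n m : ℕ) (v : Fin m → Fin n → ℤ) (lam : Fin m → ℝ) : Prop :=
  IsCompact (moment n m v lam) ∧ (interior (moment n m v lam)).Nonempty ∧
  (∀ i, Module.finrank ℝ (affineSpan ℝ (facet n m v lam i)).direction = n - 1) ∧
  ∀ u ∈ Set.extremePoints ℝ (moment n m v lam),
    ∃ σ : Fin n → Fin m, Function.Injective σ ∧
      {i | ell n m v lam i u = 0} = Set.range σ ∧
      IsUnit (Matrix.det (Matrix.of fun a b : Fin n => v (σ a) b))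

/-- The universal Novikov field over `ℂ`, as a type. -/
def Lam : Type := ↥(Novikov ℂ)

instance : CommRing Lam := inferInstanceAs (CommRing ↥(Novikov ℂ))

/-- The element `T^c` of `Λ^ℂ`. -/
def TPow (c : ℝ) : Lam := NovikovT ℂ c

/-- The generators `z(𝒫) = Π_{i∈𝒫} zᵢ - T^{ω(𝒫)} Π_{i'∈𝒫'} z_{i'}^{k_{i'}}` of the quantum
Stanley–Reisner ideal.  Here `ω(𝒫) = Σ_{i∈𝒫} ℓᵢ(u) - Σ_{i'∈𝒫'} k_{i'} ℓ_{i'}(u)`, which is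
independent of `u` and equals `Σ_{i'∈𝒫'} k_{i'} λ_{i'} - Σ_{i∈𝒫} λᵢ`. -/
def SRgens (n m : ℕ) (v : Fin m → Fin n → ℤ) (lam : Fin m → ℝ) :
    Set (MvPolynomial (Fin m) Lam) :=
  {q | ∃ (Pc Pc' : Finset (Fin m)) (k : Fin m → ℕ),
    IsPrimitiveCollection n m v lam Pc ∧ SpansCone n m v lam Pc' ∧
    (∀ i ∈ Pc', 0 < k i) ∧
    (∀ j, (∑ i ∈ Pc, v i j) = ∑ i ∈ Pc', (k i : ℤ) * v i j) ∧
    q = (∏ i ∈ Pc, MvPolynomial.X i) -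
        MvPolynomial.C (TPow ((∑ i ∈ Pc', (k i : ℝ) * lam i) - ∑ i ∈ Pc, lam i)) *
          ∏ i ∈ Pc', MvPolynomial.X i ^ k i}

/-- The quantum Stanley–Reisner ideal `SR_ω(X)`. -/
def SRideal (n m : ℕ) (v : Fin m → Fin n → ℤ) (lam : Fin m → ℝ) :
    Ideal (MvPolynomial (Fin m) Lam) :=
  Ideal.span (SRgens n m v lam)

/-- The linear relation ideal `P(X)`, generated by `Σᵢ v_{i,j} zᵢ` for `j = 1, …, n`. -/
def linearRelIdeal (n m : ℕ) (v : Fin m → Fin n → ℤ) :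
    Ideal (MvPolynomial (Fin m) Lam) :=
  Ideal.span {q | ∃ j : Fin n, q = ∑ i, MvPolynomial.C ((v i j : ℤ) : Lam) * MvPolynomial.X i}

/-- `(𝔶, u) ∈ Crit(𝔓𝔒₀)`: each coordinate `𝔶ⱼ` is a (unit) element of `Λ₀ ∖ Λ₊` and all
partial derivatives `∂𝔓𝔒₀^u/∂y_k = Σᵢ v_{i,k} T^{ℓᵢ(u)} y^{vᵢ - e_k}` of the leading order
potential function `𝔓𝔒₀^u = Σᵢ T^{ℓᵢ(u)} y^{vᵢ}` vanish at `𝔶`. -/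
def IsCriticalPoint (n m : ℕ) (v : Fin m → Fin n → ℤ) (lam : Fin m → ℝ)
    (y : Fin n → Lamˣ) (u : Fin n → ℝ) : Prop :=
  (∀ j, MemLambda0 (y j : Lam) ∧ ¬ MemLambdaPlus (y j : Lam)) ∧
  ∀ k : Fin n, (∑ i : Fin m, ((v i k : ℤ) : Lam) *
    (TPow (ell n m v lam i u) *
      ((∏ j, y j ^ ((v i j) - if j = k then 1 else 0) : Lamˣ) : Lam))) = 0

/-! ### Auxiliary lemmas -/

lemma TPow_mul (a b : ℝ) : TPow a * TPow b = TPow (a + b) := by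
  apply Subtype.ext
  show (HahnSeries.single a (1:ℂ)) * (HahnSeries.single b 1) = HahnSeries.single (a+b) 1
  rw [HahnSeries.single_mul_single, one_mul]

lemma TPow_zero : TPow 0 = 1 := by
  apply Subtype.ext
  show (HahnSeries.single (0:ℝ) (1:ℂ)) = 1
  exact HahnSeries.single_zero_one

lemma isUnit_TPow (c : ℝ) : IsUnit (TPow c) :=
  ⟨⟨TPow c, TPow (-c), by rw [TPow_mul, add_neg_cancel, TPow_zero],
    by rw [TPow_mul, neg_add_cancel, TPow_zero]⟩, rfl⟩

section Geometry

variable {n m : ℕ} {v : Fin m → Fin n → ℤ} {lam : Fin m → ℝ}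

lemma ell_add_smul (i : Fin m) (u d : Fin n → ℝ) (t : ℝ) :
    ell n m v lam i (u + t • d) = ell n m v lam i u + t * ∑ j, d j * (v i j : ℝ) := by
  unfold ell
  simp only [Pi.add_apply, Pi.smul_apply, smul_eq_mul, add_mul]
  rw [Finset.sum_add_distrib, Finset.mul_sum]
  have : ∀ j ∈ Finset.univ, t * d j * (v i j : ℝ) = t * (d j * (v i j : ℝ)) :=
    fun j _ => by ring
  rw [Finset.sum_congr rfl this]
  ring

lemma sum_ell_eq (Q : Finset (Fin m)) (c : Fin m → ℝ) (u : Fin n → ℝ) :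
    ∑ i ∈ Q, c i * ell n m v lam i u
      = (∑ j, u j * ∑ i ∈ Q, c i * (v i j : ℝ)) - ∑ i ∈ Q, c i * lam i := by
  unfold ell
  simp only [mul_sub, Finset.sum_sub_distrib]
  congr 1
  simp_rw [Finset.mul_sum]
  rw [Finset.sum_comm]
  apply Finset.sum_congr rfl
  intro j _
  apply Finset.sum_congr rfl
  intro i _
  ring

lemma convex_moment : Convex ℝ (moment n m v lam) := by
  intro x hx y hy s t hs ht hst
  intro i
  have h1 := hx i
  have h2 := hy i
  have hcombo : ell n m v lam i (s • x + t • y)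
      = s * ell n m v lam i x + t * ell n m v lam i y := by
    unfold ell
    simp only [Pi.add_apply, Pi.smul_apply, smul_eq_mul, add_mul, mul_sub]
    rw [Finset.sum_add_distrib, Finset.mul_sum, Finset.mul_sum]
    have e1 : ∀ j ∈ Finset.univ, s * x j * (v i j : ℝ) = s * (x j * (v i j : ℝ)) :=
      fun j _ => by ring
    have e2 : ∀ j ∈ Finset.univ, t * y j * (v i j : ℝ) = t * (y j * (v i j : ℝ)) :=
      fun j _ => by ring
    rw [Finset.sum_congr rfl e1, Finset.sum_congr rfl e2]
    have hst' : t = 1 - s := by linarith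
    subst hst'
    ring
  show (0:ℝ) ≤ ell n m v lam i (s • x + t • y)
  rw [hcombo]
  nlinarith

end Geometry
section Geometry2

variable {n m : ℕ} {v : Fin m → Fin n → ℤ} {lam : Fin m → ℝ}

lemma ell_pos_interior (hn : 1 ≤ n) (hDelz : IsDelzant n m v lam)
    {u : Fin n → ℝ} (hu : u ∈ interior (moment n m v lam)) (i : Fin m) :
    0 < ell n m v lam i u := by
  have huP : u ∈ moment n m v lam := interior_subset hu
  rcases lt_or_eq_of_le (huP i) with h | h
  · exact h
  exfalso
  obtain ⟨ε, hε, hball⟩ := Metric.isOpen_iff.1 isOpen_interior u hu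
  have hball' : Metric.ball u ε ⊆ moment n m v lam := fun x hx => interior_subset (hball hx)
  have hsingle_norm : ∀ j : Fin n, ‖(Pi.single j 1 : Fin n → ℝ)‖ ≤ 1 := by
    intro j
    refine (pi_norm_le_iff_of_nonneg zero_le_one).2 fun b => ?_
    by_cases hb : b = j <;> simp [Pi.single_apply, hb]
  have hmem : ∀ (j : Fin n) (t : ℝ), |t| < ε → u + t • (Pi.single j 1 : Fin n → ℝ) ∈ moment n m v lam := by
    intro j t ht
    apply hball'
    rw [Metric.mem_ball, dist_eq_norm]
    have : u + t • (Pi.single j 1 : Fin n → ℝ) - u = t • (Pi.single j 1 : Fin n → ℝ) := by abel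
    rw [this, norm_smul, Real.norm_eq_abs]
    calc |t| * ‖(Pi.single j 1 : Fin n → ℝ)‖ ≤ |t| * 1 :=
          mul_le_mul_of_nonneg_left (hsingle_norm j) (abs_nonneg t)
      _ < ε := by rwa [mul_one]
  have hsum_single : ∀ (j : Fin n), (∑ j', (Pi.single j 1 : Fin n → ℝ) j' * (v i j' : ℝ)) = (v i j : ℝ) := by
    intro j
    rw [Finset.sum_eq_single j]
    · simp
    · intro b _ hb; simp [Pi.single_apply, hb]
    · simp
  have hv : ∀ j, (v i j : ℝ) = 0 := by
    intro j
    have hp : ∀ t : ℝ, |t| < ε → 0 ≤ t * (v i j : ℝ) := by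
      intro t ht
      have h2 := hmem j t ht i
      rw [ell_add_smul, hsum_single, ← h] at h2
      linarith [h2]
    have h1 := hp (ε/2) (by rw [abs_of_pos (by linarith)]; linarith)
    have h2 := hp (-(ε/2)) (by rw [abs_of_neg (by linarith)]; linarith)
    nlinarith
  -- ℓ_i is constant zero, so facet i ⊇ ball, contradiction with finrank = n - 1
  have hell_const : ∀ x : Fin n → ℝ, ell n m v lam i x = 0 := by
    intro x
    have hx : ell n m v lam i x - ell n m v lam i u
        = ∑ j, (x j - u j) * (v i j : ℝ) := by
      unfold ell
      have h5 : ∑ j, (x j - u j) * (v i j : ℝ)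
          = ∑ j, x j * (v i j : ℝ) - ∑ j, u j * (v i j : ℝ) := by
        rw [← Finset.sum_sub_distrib]
        apply Finset.sum_congr rfl
        intro j _
        ring
      rw [h5]
      ring
    simp only [hv, mul_zero, Finset.sum_const_zero] at hx
    linarith [hx, h]
  have hfacet : ∀ x ∈ Metric.ball u ε, x ∈ facet n m v lam i := by
    intro x hx
    exact ⟨hball' hx, hell_const x⟩
  have hdim := hDelz.2.2.1 i
  have htop : (affineSpan ℝ (facet n m v lam i)).direction = ⊤ := by
    rw [direction_affineSpan, eq_top_iff]
    intro x _
    have hxmem : ∀ j : Fin n, (Pi.single j 1 : Fin n → ℝ) ∈ vectorSpan ℝ (facet n m v lam i) := by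
      intro j
      have h1 : u + (ε/2) • (Pi.single j 1 : Fin n → ℝ) ∈ facet n m v lam i := by
        apply hfacet
        rw [Metric.mem_ball, dist_eq_norm]
        have : u + (ε/2) • (Pi.single j 1 : Fin n → ℝ) - u = (ε/2) • (Pi.single j 1 : Fin n → ℝ) := by abel
        rw [this, norm_smul, Real.norm_eq_abs, abs_of_pos (by linarith)]
        calc (ε/2) * ‖(Pi.single j 1 : Fin n → ℝ)‖ ≤ (ε/2) * 1 :=
              mul_le_mul_of_nonneg_left (hsingle_norm j) (by linarith)
          _ < ε := by linarith
      have h2 : u ∈ facet n m v lam i := by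
        apply hfacet; simpa using hε
      have h3 := vsub_mem_vectorSpan ℝ h1 h2
      have h4 : (u + (ε/2) • (Pi.single j 1 : Fin n → ℝ)) -ᵥ u = (ε/2) • (Pi.single j 1 : Fin n → ℝ) := by
        simp [vsub_eq_sub]
      rw [h4] at h3
      have h5 := Submodule.smul_mem _ (2/ε) h3
      rwa [smul_smul, div_mul_div_comm, mul_comm, div_self (by positivity), one_smul] at h5
    have hxeq : x = ∑ j, x j • (Pi.single j 1 : Fin n → ℝ) := by
      funext j'
      rw [Finset.sum_apply]
      rw [Finset.sum_eq_single j']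
      · simp
      · intro b _ hb
        simp [Pi.single_apply, Ne.symm hb]
      · simp
    rw [hxeq]
    exact Submodule.sum_mem _ fun j _ => Submodule.smul_mem _ _ (hxmem j)
  rw [htop, finrank_top, Module.finrank_fintype_fun_eq_card, Fintype.card_fin] at hdim
  omega

lemma continuous_ell (i : Fin m) : Continuous (ell n m v lam i) := by
  unfold ell
  exact (continuous_finset_sum _ fun j _ => (continuous_apply j).mul continuous_const).sub
    continuous_const

lemma moment_nonempty (hDelz : IsDelzant n m v lam) : (moment n m v lam).Nonempty := by
  obtain ⟨x, hx⟩ := hDelz.2.1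
  exact ⟨x, interior_subset hx⟩

lemma exists_pos_lb (hDelz : IsDelzant n m v lam) (S : Finset (Fin m))
    (hS : ¬ SpansCone n m v lam S) :
    ∃ ε : ℝ, 0 < ε ∧ ∀ u ∈ moment n m v lam, ε ≤ ∑ i ∈ S, ell n m v lam i u := by
  obtain ⟨u₀, hu₀P, hmin⟩ := hDelz.1.exists_isMinOn (moment_nonempty hDelz)
    ((continuous_finset_sum S fun i _ => continuous_ell i).continuousOn)
  refine ⟨∑ i ∈ S, ell n m v lam i u₀, ?_, fun u hu => hmin hu⟩
  have hnonneg : ∀ i ∈ S, 0 ≤ ell n m v lam i u₀ := fun i _ => hu₀P i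
  rcases (Finset.sum_nonneg hnonneg).lt_or_eq with h | h
  · exact h
  exfalso
  apply hS
  refine ⟨u₀, Set.mem_iInter₂.2 fun i hi => ⟨hu₀P, ?_⟩⟩
  have := (Finset.sum_eq_zero_iff_of_nonneg hnonneg).1 h.symm i hi
  exact this

lemma a_eq_zero_of_active (hn : 1 ≤ n) (hDelz : IsDelzant n m v lam) {a : Fin m → ℕ}
    (hsum : ∀ j, ∑ i, (a i : ℤ) * v i j = 0)
    {u₀ : Fin n → ℝ} (hu₀ : u₀ ∈ moment n m v lam)
    (hact : ∀ i, a i ≠ 0 → ell n m v lam i u₀ = 0) : a = 0 := by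
  obtain ⟨u₁, hu₁⟩ := hDelz.2.1
  have hpos : ∀ i, 0 < ell n m v lam i u₁ := ell_pos_interior hn hDelz hu₁
  have hzero : ∀ (u : Fin n → ℝ), ∑ j, u j * ∑ i, (a i : ℝ) * (v i j : ℝ) = 0 := by
    intro u
    apply Finset.sum_eq_zero
    intro j _
    have : ∑ i, (a i : ℝ) * (v i j : ℝ) = ((∑ i, (a i : ℤ) * v i j : ℤ) : ℝ) := by
      push_cast; ring_nf
    rw [this, hsum j, Int.cast_zero, mul_zero]
  have hW0 : ∀ (u : Fin n → ℝ), ∑ i, (a i : ℝ) * ell n m v lam i u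
      = - ∑ i, (a i : ℝ) * lam i := by
    intro u
    rw [show (Finset.univ : Finset (Fin m)) = Finset.univ from rfl]
    rw [sum_ell_eq Finset.univ (fun i => (a i : ℝ)) u, hzero u, zero_sub]
  have hWu₀ : ∑ i, (a i : ℝ) * ell n m v lam i u₀ = 0 := by
    apply Finset.sum_eq_zero
    intro i _
    by_cases h : a i = 0
    · simp [h]
    · rw [hact i h, mul_zero]
  have hWu₁ : ∑ i, (a i : ℝ) * ell n m v lam i u₁ = 0 := by
    rw [hW0 u₁, ← hW0 u₀, hWu₀]
  funext i
  have := (Finset.sum_eq_zero_iff_of_nonneg (fun i _ =>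
    mul_nonneg (Nat.cast_nonneg (a i)) (hpos i).le)).1 hWu₁ i (Finset.mem_univ i)
  have h2 := hpos i
  simp only [Pi.zero_apply]
  rcases mul_eq_zero.1 this with h3 | h3
  · exact_mod_cast h3
  · exact absurd h3 (ne_of_gt h2)

lemma exists_primitive_subset :
    ∀ S : Finset (Fin m), ¬ SpansCone n m v lam S →
    ∃ Pc ⊆ S, IsPrimitiveCollection n m v lam Pc := by
  intro S
  induction S using Finset.strongInduction with
  | _ S ih =>
    intro hS
    by_cases h : ∀ T ⊂ S, SpansCone n m v lam T
    · exact ⟨S, subset_rfl, hS, h⟩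
    · push_neg at h
      obtain ⟨T, hTS, hT⟩ := h
      obtain ⟨Pc, hPcT, hPc⟩ := ih T hTS hT
      exact ⟨Pc, hPcT.trans hTS.subset, hPc⟩

end Geometry2
section ConeRep

variable {n m : ℕ} {v : Fin m → Fin n → ℤ} {lam : Fin m → ℝ}

lemma exists_cone_rep (hn : 1 ≤ n) (hDelz : IsDelzant n m v lam) (w : Fin n → ℤ) :
    ∃ (S : Finset (Fin m)) (k : Fin m → ℕ), SpansCone n m v lam S ∧ (∀ i ∈ S, 0 < k i) ∧
      ∀ j, w j = ∑ i ∈ S, (k i : ℤ) * v i j := by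
  classical
  set P := moment n m v lam with hP
  have hPc : IsCompact P := hDelz.1
  have hPne : P.Nonempty := moment_nonempty hDelz
  set f : (Fin n → ℝ) → ℝ := fun u => ∑ j, u j * (w j : ℝ) with hf
  have hfc : Continuous f :=
    continuous_finset_sum _ fun j _ => (continuous_apply j).mul continuous_const
  obtain ⟨x₀, hx₀P, hx₀min'⟩ := hPc.exists_isMinOn hPne hfc.continuousOn
  have hx₀min : ∀ y ∈ P, f x₀ ≤ f y := fun y hy => hx₀min' hy
  set M : Set (Fin n → ℝ) := {x ∈ P | ∀ y ∈ P, f x ≤ f y} with hM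
  have hx₀M : x₀ ∈ M := ⟨hx₀P, hx₀min⟩
  obtain ⟨l, hl⟩ : ∃ l : (Fin n → ℝ) →L[ℝ] ℝ, ∀ x, l x = - f x := by
    refine ⟨LinearMap.toContinuousLinearMap
      { toFun := fun u => - f u
        map_add' := ?_
        map_smul' := ?_ }, fun x => rfl⟩
    · intro x y
      simp only [hf, Pi.add_apply, add_mul, Finset.sum_add_distrib]
      ring
    · intro c x
      have h1 : ∑ j, (c * x j) * (w j : ℝ) = c * ∑ j, x j * (w j : ℝ) := by
        rw [Finset.mul_sum]
        exact Finset.sum_congr rfl fun j _ => by ring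
      simp only [hf, Pi.smul_apply, smul_eq_mul, RingHom.id_apply]
      rw [h1]
      ring
  have hMexp : IsExposed ℝ P M := by
    intro _
    refine ⟨l, ?_⟩
    ext x
    simp only [hM, Set.mem_setOf_eq, hl]
    constructor
    · rintro ⟨hxP, hmin⟩
      exact ⟨hxP, fun y hy => neg_le_neg (hmin y hy)⟩
    · rintro ⟨hxP, hmin⟩
      exact ⟨hxP, fun y hy => by have := hmin y hy; linarith⟩
  have hMeq : M = P ∩ f ⁻¹' Set.Iic (f x₀) := by
    ext x
    constructor
    · rintro ⟨hxP, hmin⟩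
      exact ⟨hxP, hmin x₀ hx₀P⟩
    · rintro ⟨hxP, hle⟩
      exact ⟨hxP, fun y hy => le_trans hle (hx₀min y hy)⟩
  have hMcomp : IsCompact M := by
    rw [hMeq]
    exact hPc.inter_right (isClosed_Iic.preimage hfc)
  obtain ⟨u₀, hu₀ext⟩ := hMcomp.extremePoints_nonempty ⟨x₀, hx₀M⟩
  have hu₀extP : u₀ ∈ Set.extremePoints ℝ P :=
    (hMexp.isExtreme).extremePoints_subset_extremePoints hu₀ext
  have hu₀M : u₀ ∈ M := hu₀ext.1
  have hu₀mem : u₀ ∈ P := hu₀M.1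
  have hu₀min : ∀ y ∈ P, f u₀ ≤ f y := hu₀M.2
  obtain ⟨σ, hσinj, hact, hdet⟩ := hDelz.2.2.2 u₀ hu₀extP
  set A : Matrix (Fin n) (Fin n) ℤ := Matrix.of (fun a b => v (σ a) b) with hA
  have hinvA : A⁻¹ * A = 1 := Matrix.nonsing_inv_mul A hdet
  have hAinv : A * A⁻¹ = 1 := Matrix.mul_nonsing_inv A hdet
  set cz : Fin n → ℤ := Matrix.vecMul w A⁻¹ with hcz
  have hczA : Matrix.vecMul cz A = w := by
    rw [hcz, Matrix.vecMul_vecMul, hinvA, Matrix.vecMul_one]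
  have h_w : ∀ j, w j = ∑ b, cz b * v (σ b) j := by
    intro j
    conv_lhs => rw [← hczA]
    simp [Matrix.vecMul, dotProduct, hA]
  have hell0 : ∀ b, ell n m v lam (σ b) u₀ = 0 := by
    intro b
    have hb : σ b ∈ Set.range σ := ⟨b, rfl⟩
    rw [← hact] at hb
    exact hb
  have hactive_pos : ∀ i : Fin m, i ∉ Set.range σ → 0 < ell n m v lam i u₀ := by
    intro i hi
    rcases lt_or_eq_of_le (hu₀mem i) with h | h
    · exact h
    · exact absurd (show i ∈ Set.range σ by rw [← hact]; exact h.symm) hi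
  have hsign : ∀ a : Fin n, 0 ≤ cz a := by
    intro a
    set d : Fin n → ℝ := fun j => ((A⁻¹ j a : ℤ) : ℝ) with hd
    have hdual : ∀ b, (∑ j, d j * (v (σ b) j : ℝ)) = if b = a then 1 else 0 := by
      intro b
      have h1 : (∑ j, d j * (v (σ b) j : ℝ)) = (((A * A⁻¹) b a : ℤ) : ℝ) := by
        rw [Matrix.mul_apply]
        push_cast
        apply Finset.sum_congr rfl
        intro j _
        simp only [hd, hA, Matrix.of_apply]
        ring
      rw [h1, hAinv, Matrix.one_apply]
      by_cases hba : b = a <;> simp [hba]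
    set c : Fin m → ℝ := fun i => ∑ j, d j * (v i j : ℝ) with hc
    set Eps : Finset ℝ := insert 1 ((Finset.univ.filter (fun i => i ∉ Set.range σ)).image
      (fun i => ell n m v lam i u₀ / (1 + |c i|))) with hE
    have hEne : Eps.Nonempty := ⟨1, Finset.mem_insert_self _ _⟩
    set ε : ℝ := Eps.min' hEne with hεdef
    have hεpos : 0 < ε := by
      apply (Finset.lt_min'_iff _ _).2
      intro y hy
      rcases Finset.mem_insert.1 hy with rfl | hy
      · exact one_pos
      · obtain ⟨i, hi, rfl⟩ := Finset.mem_image.1 hy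
        have := hactive_pos i (by simpa using (Finset.mem_filter.1 hi).2)
        positivity
    have hεle : ∀ i : Fin m, i ∉ Set.range σ → ε ≤ ell n m v lam i u₀ / (1 + |c i|) := by
      intro i hi
      apply Finset.min'_le
      apply Finset.mem_insert_of_mem
      apply Finset.mem_image_of_mem
      exact Finset.mem_filter.2 ⟨Finset.mem_univ i, hi⟩
    have hmemP : u₀ + ε • d ∈ P := by
      have : ∀ i, 0 ≤ ell n m v lam i (u₀ + ε • d) := by
        intro i
        have hval := ell_add_smul (v := v) (lam := lam) i u₀ d ε
        by_cases hi : i ∈ Set.range σ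
        · obtain ⟨b, rfl⟩ := hi
          rw [hval, hdual b, hell0 b]
          by_cases hba : b = a <;> simp [hba] <;> positivity
        · have h1 := hεle i hi
          have h2 := hactive_pos i hi
          rw [hval]
          have habs : -|c i| ≤ c i := neg_abs_le _
          have h3 : ε * (1 + |c i|) ≤ ell n m v lam i u₀ :=
            (le_div_iff₀ (by positivity)).1 h1
          have hcc : (∑ j, d j * (v i j : ℝ)) = c i := rfl
          rw [hcc]
          nlinarith [abs_nonneg (c i)]
      exact this
    have hminle := hu₀min _ hmemP
    have hfval : f (u₀ + ε • d) = f u₀ + ε * ∑ j, d j * (w j : ℝ) := by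
      simp only [hf, Pi.add_apply, Pi.smul_apply, smul_eq_mul, add_mul]
      rw [Finset.sum_add_distrib, Finset.mul_sum]
      have : ∀ j ∈ Finset.univ, ε * d j * (w j : ℝ) = ε * (d j * (w j : ℝ)) :=
        fun j _ => by ring
      rw [Finset.sum_congr rfl this]
    have hge : 0 ≤ ∑ j, d j * (w j : ℝ) := by
      rw [hfval] at hminle
      nlinarith [hεpos]
    have hfin : (∑ j, d j * (w j : ℝ)) = ((cz a : ℤ) : ℝ) := by
      rw [hcz]
      simp only [Matrix.vecMul, dotProduct]
      push_cast
      apply Finset.sum_congr rfl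
      intro j _
      simp only [hd]
      ring
    rw [hfin] at hge
    exact_mod_cast hge
  set T : Finset (Fin n) := Finset.univ.filter (fun b => cz b ≠ 0) with hT
  set S : Finset (Fin m) := T.image σ with hS
  set k : Fin m → ℕ := fun i => if h : ∃ b, σ b = i then (cz h.choose).toNat else 0 with hk
  refine ⟨S, k, ?_, ?_, ?_⟩
  · refine ⟨u₀, Set.mem_iInter₂.2 fun i hi => ?_⟩
    obtain ⟨b, hbT, rfl⟩ := Finset.mem_image.1 hi
    exact ⟨hu₀mem, hell0 b⟩
  · intro i hi
    obtain ⟨b, hbT, rfl⟩ := Finset.mem_image.1 hi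
    have hbne : cz b ≠ 0 := by simpa [hT] using hbT
    have hex : ∃ b', σ b' = σ b := ⟨b, rfl⟩
    have hcb : hex.choose = b := hσinj hex.choose_spec
    have hkv : k (σ b) = (cz b).toNat := by
      simp only [hk]
      rw [dif_pos hex, hcb]
    rw [hkv]
    have := hsign b
    omega
  · intro j
    rw [hS, Finset.sum_image (fun b _ b' _ h => hσinj h)]
    have hterm : ∀ b ∈ T, ((k (σ b) : ℤ)) * v (σ b) j = cz b * v (σ b) j := by
      intro b hbT
      have hex : ∃ b', σ b' = σ b := ⟨b, rfl⟩
      have hcb : hex.choose = b := hσinj hex.choose_spec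
      have hkv : k (σ b) = (cz b).toNat := by
        simp only [hk]
        rw [dif_pos hex, hcb]
      rw [hkv, Int.toNat_of_nonneg (hsign b)]
    rw [Finset.sum_congr rfl hterm, h_w j]
    refine (Finset.sum_subset (Finset.subset_univ T) ?_).symm
    intro b _ hb
    have : cz b = 0 := by simpa [hT] using hb
    rw [this, zero_mul]

end ConeRep
section Reduction

variable {n m : ℕ} {v : Fin m → Fin n → ℤ} {lam : Fin m → ℝ}

lemma prod_pow_ite (Q : Finset (Fin m)) (c : Fin m → ℕ) :
    (∏ i, (MvPolynomial.X i : MvPolynomial (Fin m) Lam) ^ (if i ∈ Q then c i else 0))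
      = ∏ i ∈ Q, MvPolynomial.X i ^ c i := by
  rw [← Finset.prod_subset (Finset.subset_univ Q)
    (fun x _ hx => by rw [if_neg hx, pow_zero])]
  exact Finset.prod_congr rfl fun i hi => by rw [if_pos hi]

lemma sum_ite_mul {β : Type*} [CommRing β] (Q : Finset (Fin m)) (c g : Fin m → β) :
    ∑ i, (if i ∈ Q then c i else 0) * g i = ∑ i ∈ Q, c i * g i := by
  rw [← Finset.sum_subset (Finset.subset_univ Q)
    (fun x _ hx => by rw [if_neg hx, zero_mul])]
  exact Finset.sum_congr rfl fun i hi => by rw [if_pos hi]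

lemma monomial_reduction (hn : 1 ≤ n) (hDelz : IsDelzant n m v lam)
    (a : Fin m → ℕ) (hsum : ∀ j, ∑ i, (a i : ℤ) * v i j = 0) :
    ∃ c : ℝ, (∏ i, (MvPolynomial.X i : MvPolynomial (Fin m) Lam) ^ a i)
      - MvPolynomial.C (TPow c) ∈ SRideal n m v lam := by
  classical
  obtain ⟨u₁, hu₁⟩ := hDelz.2.1
  have hpos : ∀ i, 0 < ell n m v lam i u₁ := ell_pos_interior hn hDelz hu₁
  set ef : Finset (Fin m) → ℝ := fun S =>
    if h : ¬ SpansCone n m v lam S then (exists_pos_lb hDelz S h).choose else 1 with hef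
  have hef_pos : ∀ S, 0 < ef S := by
    intro S
    simp only [hef]
    split
    · exact (exists_pos_lb hDelz S (by assumption)).choose_spec.1
    · exact one_pos
  have hef_le : ∀ S, (hS : ¬ SpansCone n m v lam S) → ∀ u ∈ moment n m v lam,
      ef S ≤ ∑ i ∈ S, ell n m v lam i u := by
    intro S hS
    simp only [hef, dif_pos hS]
    exact (exists_pos_lb hDelz S hS).choose_spec.2
  set F : Finset (Finset (Fin m)) :=
    Finset.univ.filter (fun S => ¬ SpansCone n m v lam S) with hF
  set Om : Finset ℝ := insert 1 (F.image ef) with hOm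
  have hOmne : Om.Nonempty := ⟨1, Finset.mem_insert_self _ _⟩
  set ω₀ : ℝ := Om.min' hOmne with hω₀def
  have hω₀pos : 0 < ω₀ := by
    apply (Finset.lt_min'_iff _ _).2
    intro y hy
    rcases Finset.mem_insert.1 hy with rfl | hy
    · exact one_pos
    · obtain ⟨S, _, rfl⟩ := Finset.mem_image.1 hy
      exact hef_pos S
  have hω₀le : ∀ S : Finset (Fin m), ¬ SpansCone n m v lam S →
      ∀ u ∈ moment n m v lam, ω₀ ≤ ∑ i ∈ S, ell n m v lam i u := by
    intro S hS u hu
    refine le_trans (Finset.min'_le _ _ ?_) (hef_le S hS u hu)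
    exact Finset.mem_insert_of_mem
      (Finset.mem_image_of_mem ef (Finset.mem_filter.2 ⟨Finset.mem_univ _, hS⟩))
  suffices H : ∀ N : ℕ, ∀ a : Fin m → ℕ, (∀ j, ∑ i, (a i : ℤ) * v i j = 0) →
      (∑ i, (a i : ℝ) * ell n m v lam i u₁) ≤ N * ω₀ →
      ∃ c : ℝ, (∏ i, (MvPolynomial.X i : MvPolynomial (Fin m) Lam) ^ a i)
        - MvPolynomial.C (TPow c) ∈ SRideal n m v lam by
    obtain ⟨N, hN⟩ := exists_nat_ge ((∑ i, (a i : ℝ) * ell n m v lam i u₁) / ω₀)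
    refine H N a hsum ?_
    rw [div_le_iff₀ hω₀pos] at hN
    exact hN
  intro N
  induction N with
  | zero =>
    intro a hsum hW
    have h1 : ∀ i ∈ Finset.univ, 0 ≤ (a i : ℝ) * ell n m v lam i u₁ :=
      fun i _ => mul_nonneg (Nat.cast_nonneg _) (hpos i).le
    have h2 : ∑ i, (a i : ℝ) * ell n m v lam i u₁ = 0 :=
      le_antisymm (by simpa using hW) (Finset.sum_nonneg h1)
    have ha0 : ∀ i, a i = 0 := by
      intro i
      have := (Finset.sum_eq_zero_iff_of_nonneg h1).1 h2 i (Finset.mem_univ i)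
      rcases mul_eq_zero.1 this with h | h
      · exact_mod_cast h
      · exact absurd h (ne_of_gt (hpos i))
    refine ⟨0, ?_⟩
    have hone : (∏ i, (MvPolynomial.X i : MvPolynomial (Fin m) Lam) ^ a i) = 1 :=
      Finset.prod_eq_one fun i _ => by rw [ha0 i, pow_zero]
    rw [hone, TPow_zero, map_one, sub_self]
    exact Ideal.zero_mem _
  | succ N ih =>
    intro a hsum hW
    by_cases ha0 : ∀ i, a i = 0
    · refine ⟨0, ?_⟩
      have hone : (∏ i, (MvPolynomial.X i : MvPolynomial (Fin m) Lam) ^ a i) = 1 :=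
        Finset.prod_eq_one fun i _ => by rw [ha0 i, pow_zero]
      rw [hone, TPow_zero, map_one, sub_self]
      exact Ideal.zero_mem _
    obtain ⟨i₀, hi₀⟩ : ∃ i, a i ≠ 0 := by push_neg at ha0; exact ha0
    set supp : Finset (Fin m) := Finset.univ.filter (fun i => a i ≠ 0) with hsupp
    have hns : ¬ SpansCone n m v lam supp := by
      rintro ⟨u₀, hu₀⟩
      have hu₀f : ∀ i ∈ supp, u₀ ∈ facet n m v lam i := fun i hi => Set.mem_iInter₂.1 hu₀ i hi
      have hu₀P : u₀ ∈ moment n m v lam :=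
        (hu₀f i₀ (Finset.mem_filter.2 ⟨Finset.mem_univ _, hi₀⟩)).1
      have hact : ∀ i, a i ≠ 0 → ell n m v lam i u₀ = 0 := fun i hi =>
        (hu₀f i (Finset.mem_filter.2 ⟨Finset.mem_univ _, hi⟩)).2
      have := a_eq_zero_of_active hn hDelz hsum hu₀P hact
      exact hi₀ (by rw [this]; rfl)
    obtain ⟨Pc, hPcsub, hPcprim⟩ := exists_primitive_subset supp hns
    obtain ⟨Pc', k, hsp', hkpos, hwsum⟩ :=
      exists_cone_rep hn hDelz (fun j => ∑ i ∈ Pc, v i j)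
    have hws : ∀ j, (∑ i ∈ Pc, v i j) = ∑ i ∈ Pc', (k i : ℤ) * v i j := hwsum
    set ω : ℝ := (∑ i ∈ Pc', (k i : ℝ) * lam i) - ∑ i ∈ Pc, lam i with hω
    set q : MvPolynomial (Fin m) Lam :=
      (∏ i ∈ Pc, MvPolynomial.X i) -
        MvPolynomial.C (TPow ω) * ∏ i ∈ Pc', MvPolynomial.X i ^ k i with hq
    have hqgen : q ∈ SRgens n m v lam := ⟨Pc, Pc', k, hPcprim, hsp', hkpos, hws, rfl⟩
    have haPc : ∀ i ∈ Pc, 1 ≤ a i := by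
      intro i hi
      have h := hPcsub hi
      rw [hsupp, Finset.mem_filter] at h
      omega
    set a' : Fin m → ℕ := fun i => a i - (if i ∈ Pc then 1 else 0) with ha'
    set b : Fin m → ℕ := fun i => a' i + (if i ∈ Pc' then k i else 0) with hb
    have haeq : ∀ i, a i = a' i + (if i ∈ Pc then 1 else 0) := by
      intro i
      by_cases hi : i ∈ Pc
      · simp only [ha', if_pos hi]
        have := haPc i hi
        omega
      · simp only [ha', if_neg hi]
        omega
    have hprodA : (∏ i, (MvPolynomial.X i : MvPolynomial (Fin m) Lam) ^ a i)
        = (∏ i, MvPolynomial.X i ^ a' i) * ∏ i ∈ Pc, MvPolynomial.X i := by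
      have h1 : (∏ i ∈ Pc, (MvPolynomial.X i : MvPolynomial (Fin m) Lam))
          = ∏ i ∈ Pc, MvPolynomial.X i ^ (fun _ => 1 : Fin m → ℕ) i := by
        exact Finset.prod_congr rfl fun i _ => (pow_one _).symm
      rw [h1, ← prod_pow_ite Pc (fun _ => 1), ← Finset.prod_mul_distrib]
      exact Finset.prod_congr rfl fun i _ => by rw [← pow_add, ← haeq i]
    have hprodB : (∏ i, (MvPolynomial.X i : MvPolynomial (Fin m) Lam) ^ b i)
        = (∏ i, MvPolynomial.X i ^ a' i) * ∏ i ∈ Pc', MvPolynomial.X i ^ k i := by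
      rw [← prod_pow_ite Pc' k, ← Finset.prod_mul_distrib]
      exact Finset.prod_congr rfl fun i _ => by rw [← pow_add]
    have hmem1 : (∏ i, (MvPolynomial.X i : MvPolynomial (Fin m) Lam) ^ a i)
        - MvPolynomial.C (TPow ω) * (∏ i, MvPolynomial.X i ^ b i) ∈ SRideal n m v lam := by
      have hkey : (∏ i, (MvPolynomial.X i : MvPolynomial (Fin m) Lam) ^ a i)
          - MvPolynomial.C (TPow ω) * (∏ i, MvPolynomial.X i ^ b i)
          = (∏ i, MvPolynomial.X i ^ a' i) * q := by
        rw [hprodA, hprodB, hq]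
        ring
      rw [hkey]
      exact Ideal.mul_mem_left _ _ (Ideal.subset_span hqgen)
    have hbz : ∀ i, (b i : ℤ) = (a i : ℤ) - (if i ∈ Pc then 1 else 0)
        + (if i ∈ Pc' then (k i : ℤ) else 0) := by
      intro i
      by_cases h1 : i ∈ Pc
      · have h3 := haPc i h1
        by_cases h2 : i ∈ Pc'
        · simp only [hb, ha', if_pos h1, if_pos h2]
          omega
        · simp only [hb, ha', if_pos h1, if_neg h2]
          omega
      · by_cases h2 : i ∈ Pc'
        · simp only [hb, ha', if_neg h1, if_pos h2]
          omega
        · simp only [hb, ha', if_neg h1, if_neg h2]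
          omega
    have hsum_b : ∀ j, ∑ i, (b i : ℤ) * v i j = 0 := by
      intro j
      have e1 : ∑ i, (if i ∈ Pc then (1:ℤ) else 0) * v i j = ∑ i ∈ Pc, v i j := by
        rw [sum_ite_mul]
        exact Finset.sum_congr rfl fun i _ => one_mul _
      have e2 : ∑ i, (if i ∈ Pc' then (k i : ℤ) else 0) * v i j
          = ∑ i ∈ Pc', (k i : ℤ) * v i j := sum_ite_mul Pc' _ _
      calc ∑ i, (b i : ℤ) * v i j
          = ∑ i, ((a i : ℤ) * v i j - (if i ∈ Pc then (1:ℤ) else 0) * v i j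
              + (if i ∈ Pc' then (k i : ℤ) else 0) * v i j) := by
            refine Finset.sum_congr rfl fun i _ => ?_
            rw [hbz i]
            ring
        _ = (∑ i, (a i : ℤ) * v i j) - (∑ i, (if i ∈ Pc then (1:ℤ) else 0) * v i j)
            + ∑ i, (if i ∈ Pc' then (k i : ℤ) else 0) * v i j := by
            rw [Finset.sum_add_distrib, Finset.sum_sub_distrib]
        _ = 0 := by
            rw [e1, e2, hsum j, ← hws j]
            ring
    have homega_eq : ∀ u : Fin n → ℝ,
        (∑ i ∈ Pc, ell n m v lam i u) - (∑ i ∈ Pc', (k i : ℝ) * ell n m v lam i u) = ω := by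
      intro u
      have h1 := sum_ell_eq (v := v) (lam := lam) Pc (fun _ => 1) u
      have h2 := sum_ell_eq (v := v) (lam := lam) Pc' (fun i => (k i : ℝ)) u
      simp only [one_mul] at h1
      have h3 : ∀ j, (∑ i ∈ Pc', (k i : ℝ) * (v i j : ℝ)) = ∑ i ∈ Pc, (v i j : ℝ) := by
        intro j
        exact_mod_cast (hws j).symm
      have h4 : (∑ j, u j * ∑ i ∈ Pc', (k i : ℝ) * (v i j : ℝ))
          = ∑ j, u j * ∑ i ∈ Pc, (v i j : ℝ) := by
        refine Finset.sum_congr rfl fun j _ => ?_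
        rw [h3 j]
      rw [h1, h2, h4, hω]
      ring
    obtain ⟨u₀', hu₀'P, hu₀'act⟩ : ∃ u', u' ∈ moment n m v lam ∧
        ∀ i ∈ Pc', ell n m v lam i u' = 0 := by
      rcases Finset.eq_empty_or_nonempty Pc' with he | ⟨i₁, hi₁⟩
      · obtain ⟨p, hp⟩ := moment_nonempty hDelz
        exact ⟨p, hp, by simp [he]⟩
      · obtain ⟨u', hu'⟩ := hsp'
        have hf : ∀ i ∈ Pc', u' ∈ facet n m v lam i := fun i hi => Set.mem_iInter₂.1 hu' i hi
        exact ⟨u', (hf i₁ hi₁).1, fun i hi => (hf i hi).2⟩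
    have hωlb : ω₀ ≤ ω := by
      have h5 := homega_eq u₀'
      have hz : ∑ i ∈ Pc', (k i : ℝ) * ell n m v lam i u₀' = 0 :=
        Finset.sum_eq_zero fun i hi => by rw [hu₀'act i hi, mul_zero]
      rw [hz, sub_zero] at h5
      rw [← h5]
      exact hω₀le Pc hPcprim.1 u₀' hu₀'P
    have hbr : ∀ i, (b i : ℝ) = (a i : ℝ) - (if i ∈ Pc then 1 else 0)
        + (if i ∈ Pc' then (k i : ℝ) else 0) := by
      intro i
      by_cases h1 : i ∈ Pc
      · have h3 := haPc i h1
        by_cases h2 : i ∈ Pc'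
        · simp only [hb, ha', if_pos h1, if_pos h2]
          rw [Nat.cast_add, Nat.cast_sub h3]
          push_cast
          ring
        · simp only [hb, ha', if_pos h1, if_neg h2]
          rw [Nat.cast_add, Nat.cast_sub h3]
          push_cast
          ring
      · by_cases h2 : i ∈ Pc'
        · simp only [hb, ha', if_neg h1, if_pos h2, Nat.sub_zero]
          push_cast
          ring
        · simp only [hb, ha', if_neg h1, if_neg h2, Nat.sub_zero]
          push_cast
          ring
    have hWb : ∑ i, (b i : ℝ) * ell n m v lam i u₁
        = (∑ i, (a i : ℝ) * ell n m v lam i u₁) - ω := by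
      have e1 : ∑ i, (if i ∈ Pc then (1:ℝ) else 0) * ell n m v lam i u₁
          = ∑ i ∈ Pc, ell n m v lam i u₁ := by
        rw [sum_ite_mul]
        exact Finset.sum_congr rfl fun i _ => one_mul _
      have e2 : ∑ i, (if i ∈ Pc' then (k i : ℝ) else 0) * ell n m v lam i u₁
          = ∑ i ∈ Pc', (k i : ℝ) * ell n m v lam i u₁ := sum_ite_mul Pc' _ _
      calc ∑ i, (b i : ℝ) * ell n m v lam i u₁
          = ∑ i, ((a i : ℝ) * ell n m v lam i u₁
              - (if i ∈ Pc then (1:ℝ) else 0) * ell n m v lam i u₁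
              + (if i ∈ Pc' then (k i : ℝ) else 0) * ell n m v lam i u₁) := by
            refine Finset.sum_congr rfl fun i _ => ?_
            rw [hbr i]
            ring
        _ = (∑ i, (a i : ℝ) * ell n m v lam i u₁)
            - (∑ i, (if i ∈ Pc then (1:ℝ) else 0) * ell n m v lam i u₁)
            + ∑ i, (if i ∈ Pc' then (k i : ℝ) else 0) * ell n m v lam i u₁ := by
            rw [Finset.sum_add_distrib, Finset.sum_sub_distrib]
        _ = (∑ i, (a i : ℝ) * ell n m v lam i u₁) - ω := by
            rw [e1, e2]
            have := homega_eq u₁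
            linarith
    obtain ⟨c, hc⟩ := ih b hsum_b (by
      rw [hWb]
      push_cast at hW ⊢
      linarith)
    refine ⟨ω + c, ?_⟩
    have hfinal : (∏ i, (MvPolynomial.X i : MvPolynomial (Fin m) Lam) ^ a i)
        - MvPolynomial.C (TPow (ω + c))
        = ((∏ i, MvPolynomial.X i ^ a i)
            - MvPolynomial.C (TPow ω) * (∏ i, MvPolynomial.X i ^ b i))
          + MvPolynomial.C (TPow ω) * ((∏ i, MvPolynomial.X i ^ b i)
            - MvPolynomial.C (TPow c)) := by
      rw [← TPow_mul, map_mul]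
      ring
    rw [hfinal]
    exact Ideal.add_mem _ hmem1 (Ideal.mul_mem_left _ _ hc)

end Reduction
/-- **Statement 12** (Corollary 6.8 of Fukaya–Oh–Ohta–Ono, *Lagrangian Floer theory on
compact toric manifolds I*).  For every `i`, the class of `zᵢ` in the quotient ring
`Λ^ℂ[z₁, …, z_m]/SR_ω(X)` is invertible. -/
theorem X_isUnit_in_quotient_by_SR
    (n m : ℕ) (hn : 1 ≤ n) (hm : 1 ≤ m)
    (v : Fin m → Fin n → ℤ) (lam : Fin m → ℝ)
    (hDelz : IsDelzant n m v lam) (i : Fin m) :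
    IsUnit (Ideal.Quotient.mk (SRideal n m v lam) (MvPolynomial.X i)) := by
  classical
  obtain ⟨S, k, hS, hkpos, hsum⟩ := exists_cone_rep hn hDelz (fun j => - v i j)
  have hsum' : ∀ j, (- v i j : ℤ) = ∑ i' ∈ S, (k i' : ℤ) * v i' j := hsum
  set a : Fin m → ℕ := fun i' => (if i' = i then 1 else 0) + (if i' ∈ S then k i' else 0)
    with ha
  have hsum_a : ∀ j, ∑ i', (a i' : ℤ) * v i' j = 0 := by
    intro j
    have e0 : ∑ i', (if i' = i then (1:ℤ) else 0) * v i' j = v i j := by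
      rw [Finset.sum_eq_single i]
      · simp
      · intro b _ hb
        rw [if_neg hb, zero_mul]
      · intro h
        exact absurd (Finset.mem_univ i) h
    have e2 : ∑ i', (if i' ∈ S then (k i' : ℤ) else 0) * v i' j
        = ∑ i' ∈ S, (k i' : ℤ) * v i' j := sum_ite_mul S _ _
    calc ∑ i', (a i' : ℤ) * v i' j
        = ∑ i', ((if i' = i then (1:ℤ) else 0) * v i' j
            + (if i' ∈ S then (k i' : ℤ) else 0) * v i' j) := by
          refine Finset.sum_congr rfl fun i' _ => ?_
          by_cases h1 : i' = i
          · by_cases h2 : i' ∈ S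
            · simp only [ha, if_pos h1, if_pos h2]
              push_cast
              ring
            · simp only [ha, if_pos h1, if_neg h2]
              push_cast
              ring
          · by_cases h2 : i' ∈ S
            · simp only [ha, if_neg h1, if_pos h2]
              push_cast
              ring
            · simp only [ha, if_neg h1, if_neg h2]
              push_cast
              ring
      _ = v i j + ∑ i' ∈ S, (k i' : ℤ) * v i' j := by
          rw [Finset.sum_add_distrib, e0, e2]
      _ = 0 := by
          rw [← hsum' j]
          ring
  obtain ⟨c, hc⟩ := monomial_reduction hn hDelz a hsum_a
  have h1 : (∏ i', (MvPolynomial.X i' : MvPolynomial (Fin m) Lam) ^ (if i' = i then 1 else 0))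
      = MvPolynomial.X i := by
    rw [Finset.prod_eq_single i]
    · simp
    · intro b _ hb
      rw [if_neg hb, pow_zero]
    · intro h
      exact absurd (Finset.mem_univ i) h
  have hsplit : (∏ i', (MvPolynomial.X i' : MvPolynomial (Fin m) Lam) ^ a i')
      = MvPolynomial.X i
        * ∏ i', (MvPolynomial.X i' : MvPolynomial (Fin m) Lam) ^ (if i' ∈ S then k i' else 0) := by
    rw [← h1, ← Finset.prod_mul_distrib]
    refine Finset.prod_congr rfl fun i' _ => ?_
    rw [← pow_add]
  rw [hsplit] at hc
  have hqeq : Ideal.Quotient.mk (SRideal n m v lam)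
        (MvPolynomial.X i
          * ∏ i', (MvPolynomial.X i' : MvPolynomial (Fin m) Lam) ^ (if i' ∈ S then k i' else 0))
      = Ideal.Quotient.mk (SRideal n m v lam) (MvPolynomial.C (TPow c)) :=
    Ideal.Quotient.eq.2 hc
  rw [map_mul] at hqeq
  have hunit : IsUnit (Ideal.Quotient.mk (SRideal n m v lam) (MvPolynomial.C (TPow c))) :=
    (isUnit_TPow c).map ((Ideal.Quotient.mk (SRideal n m v lam)).comp
      (MvPolynomial.C : Lam →+* MvPolynomial (Fin m) Lam))
  refine isUnit_of_mul_isUnit_left (y := Ideal.Quotient.mk (SRideal n m v lam)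
    (∏ i', (MvPolynomial.X i' : MvPolynomial (Fin m) Lam) ^ (if i' ∈ S then k i' else 0))) ?_
  rw [hqeq]
  exact hunit
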